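/- For every positive integer m, f(m) = min(m, ⌈2√m⌉). -/

import Mathlib

/-- The matching property: every set `A` of `m` positive integers and every real `x`
admit `r` disjoint pairs `(cᵢ, bᵢ)` with `cᵢ ∈ A` distinct, `bᵢ` distinct integers in
`(x, x + 2 * max A)`, and `cᵢ ∣ bᵢ`. -/
def MatchProp (m r : ℕ) : Prop :=
  ∀ A : Finset ℕ, A.card = m → (∀ a ∈ A, 0 < a) → ∀ x : ℝ,
    ∃ c : Fin r → ℕ, ∃ b : Fin r → ℤ,
      Function.Injective c ∧ Function.Injective b ∧
      ∀ i : Fin r, c i ∈ A ∧ (c i : ℤ) ∣ b i ∧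
        x < (b i : ℝ) ∧ (b i : ℝ) < x + 2 * (A.sup id : ℕ)

/-- `f m` is the largest `r` such that `MatchProp m r` holds. -/
noncomputable def f (m : ℕ) : ℕ := sSup {r : ℕ | MatchProp m r}

open Classical in
noncomputable def Ifin (x : ℝ) (L : ℕ) : Finset ℤ :=
  Finset.Icc (⌊x⌋ + 1) (⌈x + 2*(L:ℝ)⌉ - 1)

lemma mem_Ifin {x : ℝ} {L : ℕ} {b : ℤ} :
    b ∈ Ifin x L ↔ x < (b:ℝ) ∧ (b:ℝ) < x + 2*L := by
  simp only [Ifin, Finset.mem_Icc]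
  constructor
  · rintro ⟨h1, h2⟩
    refine ⟨?_, ?_⟩
    · calc x < (⌊x⌋ : ℝ) + 1 := Int.lt_floor_add_one x
        _ ≤ b := by exact_mod_cast h1
    · have : b < ⌈x + 2*(L:ℝ)⌉ := by omega
      have := Int.lt_ceil.mp this
      linarith
  · rintro ⟨h1, h2⟩
    exact ⟨by have := Int.floor_lt.mpr h1; omega, by have := Int.lt_ceil.mpr h2; omega⟩

open Classical in
noncomputable def NSet (x : ℝ) (L : ℕ) (S : Finset ℕ) : Finset ℤ :=
  (Ifin x L).filter (fun b => ∃ a ∈ S, (a:ℤ) ∣ b)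

open Classical in
lemma mem_NSet {x : ℝ} {L : ℕ} {S : Finset ℕ} {b : ℤ} :
    b ∈ NSet x L S ↔ (x < (b:ℝ) ∧ (b:ℝ) < x + 2*L) ∧ ∃ a ∈ S, (a:ℤ) ∣ b := by
  simp [NSet, Finset.mem_filter, mem_Ifin, and_assoc]

def uaZ (y : ℤ) (a : ℕ) : ℤ := y - y % (a:ℤ)

lemma uaZ_dvd (y : ℤ) (a : ℕ) : (a:ℤ) ∣ uaZ y a := by
  have h := Int.emod_def y (a:ℤ)
  exact ⟨y / a, by unfold uaZ; linarith⟩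

lemma uaZ_le (y : ℤ) {a : ℕ} (ha : 0 < a) : uaZ y a ≤ y := by
  have := Int.emod_nonneg y (by exact_mod_cast ha.ne' : (a:ℤ) ≠ 0)
  unfold uaZ; omega

lemma uaZ_gt (y : ℤ) {a : ℕ} (ha : 0 < a) : y - a < uaZ y a := by
  have := Int.emod_lt_of_pos y (by exact_mod_cast ha : (0:ℤ) < a)
  unfold uaZ; omega

def va2Z (w : ℤ) (a : ℕ) : ℤ := w + (-w) % (a:ℤ)

lemma va2Z_dvd (w : ℤ) (a : ℕ) : (a:ℤ) ∣ va2Z w a := by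
  have h := Int.emod_def (-w) (a:ℤ)
  refine ⟨-((-w)/a), by unfold va2Z; push_cast; linarith⟩

lemma va2Z_ge (w : ℤ) {a : ℕ} (ha : 0 < a) : w ≤ va2Z w a := by
  have := Int.emod_nonneg (-w) (by exact_mod_cast ha.ne' : (a:ℤ) ≠ 0)
  unfold va2Z; omega

lemma va2Z_lt (w : ℤ) {a : ℕ} (ha : 0 < a) : va2Z w a < w + a := by
  have := Int.emod_lt_of_pos (-w) (by exact_mod_cast ha : (0:ℤ) < a)
  unfold va2Z; omega

lemma va2Z_eq (w : ℤ) {a : ℕ} (hdvd : (a:ℤ) ∣ w) : va2Z w a = w := by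
  have : (-w) % (a:ℤ) = 0 := Int.emod_eq_zero_of_dvd (dvd_neg.mpr hdvd)
  unfold va2Z; omega

set_option maxHeartbeats 2000000 in
open Classical in
lemma key_lemma (x : ℝ) (L : ℕ) (hL : 0 < L) (S : Finset ℕ)
    (hS : ∀ a ∈ S, 0 < a ∧ a ≤ L) :
    min S.card ⌈2 * Real.sqrt S.card⌉₊ ≤ (NSet x L S).card := by
  set y : ℤ := ⌊x + L⌋ with hy
  -- basic facts about ua
  have hyx : x + L - 1 < (y:ℝ) ∧ (y:ℝ) ≤ x + L := ⟨by
    have := Int.lt_floor_add_one (x + L); push_cast; linarith, Int.floor_le _⟩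
  have hua : ∀ a ∈ S, x < (uaZ y a : ℝ) ∧ ((uaZ y a : ℝ)) ≤ x + L ∧ uaZ y a ≤ y := by
    intro a haS
    obtain ⟨ha0, haL⟩ := hS a haS
    have h1 := uaZ_le y ha0
    have h2 := uaZ_gt y ha0
    have hc1 : ((uaZ y a : ℤ) : ℝ) ≤ (y : ℝ) := by exact_mod_cast h1
    have hc2 : ((y:ℝ)) - a < (uaZ y a : ℝ) := by exact_mod_cast h2
    have haLr : (a:ℝ) ≤ L := by exact_mod_cast haL
    have hc3 : ((y:ℝ)) + 1 - a ≤ (uaZ y a : ℝ) := by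
      have : y + 1 - (a:ℤ) ≤ uaZ y a := by omega
      exact_mod_cast this
    refine ⟨by linarith [hyx.1], by linarith [hyx.2], h1⟩
  have hL1 : (1:ℝ) ≤ L := by exact_mod_cast hL
  have huaNS : ∀ a ∈ S, uaZ y a ∈ NSet x L S := by
    intro a haS
    obtain ⟨h1, h2, h3⟩ := hua a haS
    have h4 : (uaZ y a : ℝ) < x + 2*L := by linarith
    exact mem_NSet.mpr ⟨⟨h1, h4⟩, ⟨a, haS, uaZ_dvd y a⟩⟩
  have hvagty : ∀ a ∈ S, y < uaZ y a + a := by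
    intro a haS
    have := uaZ_gt y (hS a haS).1
    omega
  set U : Finset ℤ := (NSet x L S).filter (fun b => b ≤ y) with hU
  set V : Finset ℤ := (NSet x L S).filter (fun b => ¬ b ≤ y) with hV
  have hcardUV : U.card + V.card = (NSet x L S).card :=
    Finset.card_filter_add_card_filter_not (p := fun b => b ≤ y)
  have huaU : ∀ a ∈ S, uaZ y a ∈ U := by
    intro a haS
    exact Finset.mem_filter.mpr ⟨huaNS a haS, (hua a haS).2.2⟩
  -- non-exceptional a's map into V
  have hvaV : ∀ a ∈ S, ((uaZ y a + a : ℤ) : ℝ) < x + 2*L → uaZ y a + a ∈ V := by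
    intro a haS hlt
    refine Finset.mem_filter.mpr ⟨mem_NSet.mpr ⟨⟨?_, hlt⟩, ⟨a, haS, ?_⟩⟩, by
      have := hvagty a haS; omega⟩
    · have h1 := (hua a haS).1
      have ha0 : (0:ℝ) < a := by exact_mod_cast (hS a haS).1
      push_cast
      linarith
    · exact dvd_add (uaZ_dvd y a) dvd_rfl
  -- injectivity of the pair map
  have hinj : ∀ T : Finset ℕ, T ⊆ S → Set.InjOn (fun a : ℕ => ((uaZ y a, uaZ y a + a) : ℤ × ℤ)) T := by
    intro T hT a haT a' haT' heq
    simp only [Prod.mk.injEq] at heq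
    have : (a:ℤ) = a' := by omega
    exact_mod_cast this
  by_cases hexc : ∃ a ∈ S, ¬ (((uaZ y a + a : ℤ):ℝ) < x + 2*L)
  · -- exceptional case
    obtain ⟨a₀, ha₀S, ha₀⟩ := hexc
    push_neg at ha₀
    obtain ⟨ha₀0, ha₀L⟩ := hS a₀ ha₀S
    obtain ⟨hu1, hu2, hu3⟩ := hua a₀ ha₀S
    -- a₀ = L and ua a₀ = x + L
    have ha₀eq : a₀ = L := by
      have h1 : (a₀:ℝ) ≤ L := by exact_mod_cast ha₀L
      have h2 : (L:ℝ) ≤ a₀ := by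
        by_contra hcon
        push_neg at hcon
        have : ((uaZ y a₀ : ℤ):ℝ) + a₀ < x + 2*L := by push_cast; linarith
        exact absurd this (by push_cast at ha₀ ⊢; linarith)
      have : (a₀:ℝ) = L := le_antisymm h1 h2
      exact_mod_cast this
    set w₀ : ℤ := uaZ y a₀ with hw₀def
    have hw₀ : (w₀:ℝ) = x + L := by
      have h2 : x + 2*(L:ℝ) ≤ (w₀:ℝ) + a₀ := by push_cast at ha₀ ⊢; linarith
      have : (a₀:ℝ) = L := by exact_mod_cast ha₀eq
      linarith [hu2]
    have hyw : y = w₀ := by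
      have : (y:ℝ) = w₀ := by
        rw [hw₀, hy]
        rw [show x + (L:ℝ) = ((w₀:ℤ):ℝ) from hw₀.symm]
        simp
      exact_mod_cast this
    have hxw : x = (w₀:ℝ) - L := by linarith [hw₀]
    have hw₀U : w₀ ∈ U := huaU a₀ ha₀S
    have hw₀dvd : ((L:ℕ):ℤ) ∣ w₀ := ha₀eq ▸ uaZ_dvd y a₀
    set S' : Finset ℕ := S.erase a₀ with hS'
    have hScard : S.card = S'.card + 1 := by
      rw [hS', Finset.card_erase_of_mem ha₀S]
      have : 0 < S.card := Finset.card_pos.mpr ⟨a₀, ha₀S⟩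
      omega
    have hS'lt : ∀ a ∈ S', 0 < a ∧ a < L := by
      intro a haS'
      have h1 := hS a (Finset.mem_of_mem_erase haS')
      have h2 : a ≠ a₀ := Finset.ne_of_mem_erase haS'
      exact ⟨h1.1, lt_of_le_of_ne h1.2 (ha₀eq ▸ h2)⟩
    -- non-exceptionality for S'
    have hnoexc : ∀ a ∈ S', ((uaZ y a + a : ℤ):ℝ) < x + 2*L := by
      intro a haS'
      obtain ⟨hb0, hbL⟩ := hS'lt a haS'
      have haS : a ∈ S := Finset.mem_of_mem_erase haS'
      obtain ⟨g1, g2, g3⟩ := hua a haS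
      have : (a:ℝ) < L := by exact_mod_cast hbL
      push_cast
      linarith
    -- phi1 injection
    have hmaps1 : ∀ a ∈ S', (fun a : ℕ => ((uaZ y a, uaZ y a + a) : ℤ × ℤ)) a ∈ U ×ˢ V := by
      intro a haS'
      have haS : a ∈ S := Finset.mem_of_mem_erase haS'
      exact Finset.mem_product.mpr ⟨huaU a haS, hvaV a haS (hnoexc a haS')⟩
    have hcount1 : S'.card ≤ U.card * V.card := by
      calc S'.card ≤ (U ×ˢ V).card := Finset.card_le_card_of_injOn _ hmaps1
            (hinj S' (Finset.erase_subset _ _))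
        _ = U.card * V.card := Finset.card_product U V
    -- phi2 facts
    have hphi2 : ∀ a ∈ S', (va2Z w₀ a - a ∈ U.erase w₀) ∧ (va2Z w₀ a ∈ insert w₀ V) := by
      intro a haS'
      obtain ⟨hb0, hbL⟩ := hS'lt a haS'
      have haS : a ∈ S := Finset.mem_of_mem_erase haS'
      have hge := va2Z_ge w₀ hb0
      have hlt := va2Z_lt w₀ hb0
      have hdvd := va2Z_dvd w₀ a
      have haLZ : (a:ℤ) < L := by exact_mod_cast hbL
      have hbLr : (a:ℝ) < L := by exact_mod_cast hbL
      have hu_mem : va2Z w₀ a - a ∈ U.erase w₀ := by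
        have h1 : x < ((va2Z w₀ a - a : ℤ):ℝ) := by
          have : (w₀:ℤ) - a ≤ va2Z w₀ a - a := by omega
          have hr : ((w₀:ℝ)) - a ≤ ((va2Z w₀ a - a : ℤ):ℝ) := by exact_mod_cast this
          rw [hxw]
          linarith
        have h2 : ((va2Z w₀ a - a : ℤ):ℝ) < x + 2*L := by
          have : va2Z w₀ a - a < w₀ := by omega
          have hr : ((va2Z w₀ a - a : ℤ):ℝ) < (w₀:ℝ) := by exact_mod_cast this
          linarith [hw₀, hL1]
        have hns : va2Z w₀ a - a ∈ NSet x L S :=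
          mem_NSet.mpr ⟨⟨h1, h2⟩, ⟨a, haS, by exact dvd_sub hdvd dvd_rfl⟩⟩
        refine Finset.mem_erase.mpr ⟨by omega, Finset.mem_filter.mpr ⟨hns, by omega⟩⟩
      have hv_mem : va2Z w₀ a ∈ insert w₀ V := by
        rcases eq_or_lt_of_le hge with heq | hlt2
        · exact Finset.mem_insert.mpr (Or.inl heq.symm)
        · refine Finset.mem_insert.mpr (Or.inr ?_)
          have h1 : x < ((va2Z w₀ a : ℤ):ℝ) := by
            have hr : (w₀:ℝ) ≤ ((va2Z w₀ a : ℤ):ℝ) := by exact_mod_cast hge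
            rw [hxw]; linarith
          have h2 : ((va2Z w₀ a : ℤ):ℝ) < x + 2*L := by
            have : va2Z w₀ a < w₀ + L := by omega
            have hr : ((va2Z w₀ a : ℤ):ℝ) < (w₀:ℝ) + L := by exact_mod_cast this
            linarith [hw₀]
          have hns : va2Z w₀ a ∈ NSet x L S := mem_NSet.mpr ⟨⟨h1, h2⟩, ⟨a, haS, hdvd⟩⟩
          exact Finset.mem_filter.mpr ⟨hns, by omega⟩
      exact ⟨hu_mem, hv_mem⟩
    have hmaps2 : ∀ a ∈ S', (fun a : ℕ => ((va2Z w₀ a - a, va2Z w₀ a) : ℤ × ℤ)) a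
        ∈ (U.erase w₀) ×ˢ (insert w₀ V) := by
      intro a haS'
      exact Finset.mem_product.mpr ⟨(hphi2 a haS').1, (hphi2 a haS').2⟩
    have hinj2 : Set.InjOn (fun a : ℕ => ((va2Z w₀ a - a, va2Z w₀ a) : ℤ × ℤ)) S' := by
      intro a ha a' ha' heq
      simp only [Prod.mk.injEq] at heq
      have : (a:ℤ) = a' := by omega
      exact_mod_cast this
    have hw₀V : w₀ ∉ V := by
      intro hmem
      have := (Finset.mem_filter.mp hmem).2
      omega
    have hcard2 : (insert w₀ V).card = V.card + 1 := Finset.card_insert_of_notMem hw₀V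
    have hUpos : 0 < U.card := Finset.card_pos.mpr ⟨w₀, hw₀U⟩
    have hcardU' : (U.erase w₀).card = U.card - 1 := Finset.card_erase_of_mem hw₀U
    have hcount2 : S'.card ≤ (U.card - 1) * (V.card + 1) := by
      calc S'.card ≤ ((U.erase w₀) ×ˢ (insert w₀ V)).card :=
            Finset.card_le_card_of_injOn _ hmaps2 hinj2
        _ = (U.card - 1) * (V.card + 1) := by
            rw [Finset.card_product, hcard2, hcardU']
    clear_value U V
    -- numeric contradiction setup
    by_contra hcon
    push_neg at hcon
    rw [← hcardUV] at hcon
    have hcon1 : U.card + V.card < S.card := lt_of_lt_of_le hcon (min_le_left _ _)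
    have hcon2 : U.card + V.card < ⌈2 * Real.sqrt S.card⌉₊ :=
      lt_of_lt_of_le hcon (min_le_right _ _)
    have hsqr : ((U.card + V.card : ℕ):ℝ) < 2 * Real.sqrt S.card := by
      exact_mod_cast Nat.lt_ceil.mp hcon2
    have hsq : (U.card + V.card)^2 < 4 * S.card := by
      have h0 : (0:ℝ) ≤ (S.card:ℝ) := Nat.cast_nonneg _
      have h1 : Real.sqrt (S.card) ^ 2 = (S.card:ℝ) := Real.sq_sqrt h0
      have hc0 : (0:ℝ) ≤ (U.card:ℝ) + V.card := add_nonneg (Nat.cast_nonneg _) (Nat.cast_nonneg _)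
      push_cast at hsqr
      have h2 : (((U.card + V.card)^2 : ℕ) : ℝ) < ((4 * S.card : ℕ):ℝ) := by
        push_cast
        nlinarith [Real.sqrt_nonneg ((S.card:ℝ))]
      exact_mod_cast h2
    have huu1 : 1 ≤ (U.card:ℤ) := by exact_mod_cast hUpos
    have e1 : (S'.card:ℤ) ≤ (U.card:ℤ) * (V.card:ℤ) := by exact_mod_cast hcount1
    have e2 : (S'.card:ℤ) ≤ ((U.card:ℤ) - 1) * ((V.card:ℤ) + 1) := by
      have hc : (((U.card - 1) * (V.card + 1) : ℕ) : ℤ)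
          = ((U.card:ℤ) - 1) * ((V.card:ℤ) + 1) := by
        rw [Nat.cast_mul, Nat.cast_sub hUpos]
        push_cast
        ring
      calc ((S'.card:ℕ):ℤ) ≤ (((U.card - 1) * (V.card + 1) : ℕ) : ℤ) := by
            exact_mod_cast hcount2
        _ = _ := hc
    have e3 : ((U.card:ℤ) + (V.card:ℤ))^2 < 4 * ((S'.card:ℤ) + 1) := by
      have hS2 : ((S.card:ℕ) : ℤ) = (S'.card:ℤ) + 1 := by exact_mod_cast hScard
      have h5 : (((U.card + V.card)^2 : ℕ) : ℤ) < ((4 * S.card : ℕ) : ℤ) := by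
        exact_mod_cast hsq
      push_cast at h5
      rw [hS2] at h5
      push_cast at h5 ⊢
      linarith
    have e4 : (U.card:ℤ) + (V.card:ℤ) < (S'.card:ℤ) + 1 := by
      have hS2 : ((S.card:ℕ) : ℤ) = (S'.card:ℤ) + 1 := by exact_mod_cast hScard
      have h5 : ((U.card:ℤ)) + V.card < ((S.card:ℕ):ℤ) := by exact_mod_cast hcon1
      omega
    have q1 : 4*((U.card:ℤ) * (V.card:ℤ)) ≤ ((U.card:ℤ) + (V.card:ℤ))^2 := by
      nlinarith [sq_nonneg ((U.card:ℤ) - (V.card:ℤ))]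
    have g1 : (U.card:ℤ) * (V.card:ℤ) = (S'.card:ℤ) := by
      have q2 : (U.card:ℤ) * (V.card:ℤ) < (S'.card:ℤ) + 1 := by linarith
      omega
    have q3 : ((U.card:ℤ) - 1) * ((V.card:ℤ) + 1)
        = (U.card:ℤ) * (V.card:ℤ) + (U.card:ℤ) - (V.card:ℤ) - 1 := by ring
    have q4 : 4*(((U.card:ℤ) - 1) * ((V.card:ℤ) + 1)) ≤ ((U.card:ℤ) + (V.card:ℤ))^2 := by
      nlinarith [sq_nonneg ((U.card:ℤ) - (V.card:ℤ) - 2)]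
    have g2 : (U.card:ℤ) = (V.card:ℤ) + 1 := by
      have q5 : ((U.card:ℤ) - 1) * ((V.card:ℤ) + 1) < (S'.card:ℤ) + 1 := by linarith
      omega
    have g3 : 2 ≤ (V.card:ℤ) := by
      have hv0 : 0 ≤ (V.card:ℤ) := Int.natCast_nonneg _
      have hvsq : (V.card:ℤ) < (V.card:ℤ) * (V.card:ℤ) := by nlinarith
      nlinarith
    have hv2 : 1 < V.card := by exact_mod_cast (by omega : (1:ℤ) < (V.card:ℤ))
    have hs'uv : U.card * V.card ≤ S'.card := by exact_mod_cast le_of_eq g1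
    have hs'uv2 : (U.erase w₀).card * (insert w₀ V).card ≤ S'.card := by
      rw [hcard2, hcardU']
      have hc : (((U.card - 1) * (V.card + 1) : ℕ) : ℤ)
          = ((U.card:ℤ) - 1) * ((V.card:ℤ) + 1) := by
        rw [Nat.cast_mul, Nat.cast_sub hUpos]
        push_cast
        ring
      have h6 : (((U.card:ℤ)) - 1) * ((V.card:ℤ) + 1) ≤ (S'.card:ℤ) := by nlinarith
      exact_mod_cast hc ▸ h6
    have himg1 : S'.image (fun a : ℕ => ((uaZ y a, uaZ y a + a) : ℤ × ℤ)) = U ×ˢ V := by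
      apply Finset.eq_of_subset_of_card_le
      · exact Finset.image_subset_iff.mpr hmaps1
      · rw [Finset.card_image_of_injOn (hinj S' (Finset.erase_subset _ _)),
          Finset.card_product]
        exact hs'uv
    have himg2 : S'.image (fun a : ℕ => ((va2Z w₀ a - a, va2Z w₀ a) : ℤ × ℤ))
        = (U.erase w₀) ×ˢ (insert w₀ V) := by
      apply Finset.eq_of_subset_of_card_le
      · exact Finset.image_subset_iff.mpr hmaps2
      · rw [Finset.card_image_of_injOn hinj2, Finset.card_product]
        exact hs'uv2
    have hrefl : ∀ w ∈ V, 2*w₀ - w ∈ U.erase w₀ := by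
      intro w hw
      have hp : ((w₀, w) : ℤ × ℤ) ∈ U ×ˢ V := Finset.mem_product.mpr ⟨hw₀U, hw⟩
      rw [← himg1] at hp
      obtain ⟨a, haS', heq⟩ := Finset.mem_image.mp hp
      simp only [Prod.mk.injEq] at heq
      obtain ⟨heq1, heq2⟩ := heq
      have haval : (a:ℤ) = w - w₀ := by omega
      have hadvd : (a:ℤ) ∣ w₀ := heq1 ▸ uaZ_dvd y a
      have hva2 : va2Z w₀ a = w₀ := va2Z_eq w₀ hadvd
      have hp2 : ((va2Z w₀ a - a, va2Z w₀ a) : ℤ × ℤ) ∈ (U.erase w₀) ×ˢ (insert w₀ V) := by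
        rw [← himg2]
        exact Finset.mem_image_of_mem _ haS'
      have := (Finset.mem_product.mp hp2).1
      rw [hva2] at this
      have hfin : w₀ - (a:ℤ) = 2*w₀ - w := by omega
      rwa [hfin] at this
    obtain ⟨w₁, hw₁, w₂, hw₂, hne⟩ := Finset.one_lt_card.mp hv2
    have hu₁ : 2*w₀ - w₁ ∈ U := Finset.mem_of_mem_erase (hrefl w₁ hw₁)
    have hu₂ : 2*w₀ - w₂ ∈ U := Finset.mem_of_mem_erase (hrefl w₂ hw₂)
    have hp1 : ((2*w₀ - w₁, w₂) : ℤ × ℤ) ∈ U ×ˢ V := Finset.mem_product.mpr ⟨hu₁, hw₂⟩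
    have hp2 : ((2*w₀ - w₂, w₁) : ℤ × ℤ) ∈ U ×ˢ V := Finset.mem_product.mpr ⟨hu₂, hw₁⟩
    rw [← himg1] at hp1 hp2
    obtain ⟨aa, haa, heqa⟩ := Finset.mem_image.mp hp1
    obtain ⟨ab, hab, heqb⟩ := Finset.mem_image.mp hp2
    simp only [Prod.mk.injEq] at heqa heqb
    have haaval : (aa:ℤ) = w₂ + w₁ - 2*w₀ := by omega
    have habval : (ab:ℤ) = w₁ + w₂ - 2*w₀ := by omega
    have haab : aa = ab := by
      have : (aa:ℤ) = (ab:ℤ) := by omega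
      exact_mod_cast this
    apply hne
    have : uaZ y aa = 2*w₀ - w₁ := heqa.1
    have h2 : uaZ y ab = 2*w₀ - w₂ := heqb.1
    rw [haab] at this
    omega
  · -- no exceptional element
    push_neg at hexc
    have hmaps : ∀ a ∈ S, (fun a : ℕ => ((uaZ y a, uaZ y a + a) : ℤ × ℤ)) a ∈ U ×ˢ V := by
      intro a haS
      exact Finset.mem_product.mpr ⟨huaU a haS, hvaV a haS (hexc a haS)⟩
    have hcount : S.card ≤ U.card * V.card := by
      calc S.card ≤ (U ×ˢ V).card := Finset.card_le_card_of_injOn _ hmaps (hinj S le_rfl)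
        _ = U.card * V.card := Finset.card_product U V
    have hceil : ⌈2 * Real.sqrt S.card⌉₊ ≤ (NSet x L S).card := by
      rw [← hcardUV]
      rw [Nat.ceil_le]
      have hsr : (S.card : ℝ) ≤ (U.card : ℝ) * V.card := by exact_mod_cast hcount
      have h4 : 4 * (S.card : ℝ) ≤ ((U.card : ℝ) + V.card)^2 := by nlinarith [sq_nonneg ((U.card:ℝ) - V.card)]
      have hsq : Real.sqrt S.card ≤ ((U.card : ℝ) + V.card)/2 := by
        rw [show ((U.card:ℝ) + V.card)/2 = Real.sqrt ((((U.card:ℝ) + V.card)/2)^2) from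
          (Real.sqrt_sq (by positivity)).symm]
        apply Real.sqrt_le_sqrt
        nlinarith
      push_cast
      linarith
    exact le_trans (min_le_right _ _) hceil

lemma arith1 (m s : ℕ) (hs : s ≤ m) :
    s ≤ min s ⌈2 * Real.sqrt s⌉₊ + (m - min m ⌈2 * Real.sqrt m⌉₊) := by
  rcases le_or_gt s ⌈2 * Real.sqrt s⌉₊ with h | h
  · rw [min_eq_left h]; omega
  · rw [min_eq_right h.le]
    have hs1 : 1 ≤ s := by
      by_contra hcon
      push_neg at hcon
      interval_cases s
      · simp at h
    have hclaim : ⌈2 * Real.sqrt m⌉₊ ≤ ⌈2 * Real.sqrt s⌉₊ + (m - s) := by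
      have hsr : (1:ℝ) ≤ s := by exact_mod_cast hs1
      have hmr : (s:ℝ) ≤ m := by exact_mod_cast hs
      have h1 : (1:ℝ) ≤ Real.sqrt s := by
        rw [show (1:ℝ) = Real.sqrt 1 from (Real.sqrt_one).symm]
        exact Real.sqrt_le_sqrt hsr
      have h2 : Real.sqrt s ≤ Real.sqrt m := Real.sqrt_le_sqrt hmr
      have h3 : Real.sqrt s ^ 2 = (s:ℝ) := Real.sq_sqrt (by positivity)
      have h4 : Real.sqrt m ^ 2 = (m:ℝ) := Real.sq_sqrt (by positivity)
      have hkey : 2 * Real.sqrt m ≤ 2 * Real.sqrt s + ((m - s : ℕ) : ℝ) := by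
        have hc : ((m - s : ℕ) : ℝ) = (m:ℝ) - s := by
          rw [Nat.cast_sub hs]
        rw [hc]
        nlinarith [mul_nonneg (sub_nonneg.mpr h2)
          (by linarith : (0:ℝ) ≤ Real.sqrt s + Real.sqrt m - 2)]
      calc ⌈2 * Real.sqrt m⌉₊ ≤ ⌈2 * Real.sqrt s + ((m - s : ℕ) : ℝ)⌉₊ :=
            Nat.ceil_le_ceil hkey
        _ = ⌈2 * Real.sqrt s⌉₊ + (m - s) := Nat.ceil_add_natCast (by positivity) _
    have hRm : min m ⌈2 * Real.sqrt m⌉₊ ≤ m := min_le_left _ _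
    have hRc : min m ⌈2 * Real.sqrt m⌉₊ ≤ ⌈2 * Real.sqrt m⌉₊ := min_le_right _ _
    omega

open Classical in
set_option maxHeartbeats 1000000 in
lemma lower (m : ℕ) (hm : 0 < m) : MatchProp m (min m ⌈2 * Real.sqrt m⌉₊) := by
  intro A hA hpos x
  set R := min m ⌈2 * Real.sqrt m⌉₊ with hR
  set L := A.sup id with hLdef
  have hAne : A.Nonempty := Finset.card_pos.mp (hA ▸ hm)
  obtain ⟨a₀, ha₀A, hLa₀⟩ := Finset.exists_mem_eq_sup A hAne id
  have hLpos : 0 < L := by rw [hLdef, hLa₀]; exact hpos a₀ ha₀A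
  have hle : ∀ a ∈ A, a ≤ L := fun a ha => Finset.le_sup (f := id) ha
  have hRm : R ≤ m := min_le_left _ _
  set Dummy : Finset ℤ := (Finset.range (m - R)).image (fun t : ℕ => (⌈x⌉ + 2*(L:ℤ) + 1 + (t:ℤ)))
    with hDum
  have hDcard : Dummy.card = m - R := by
    rw [hDum, Finset.card_image_of_injective _ (fun t t' htt => by omega), Finset.card_range]
  have hDdisj : ∀ b ∈ Dummy, b ∉ Ifin x L := by
    intro b hb hbI
    rw [hDum, Finset.mem_image] at hb
    obtain ⟨tt, htt, rfl⟩ := hb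
    have h1 := (mem_Ifin.mp hbI).2
    have h2 : x ≤ (⌈x⌉ : ℝ) := Int.le_ceil x
    push_cast at h1
    have h3 : (0:ℝ) ≤ (tt:ℝ) := Nat.cast_nonneg tt
    linarith
  set t : {a // a ∈ A} → Finset ℤ :=
    fun a => ((Ifin x L).filter (fun b => ((a : ℕ) : ℤ) ∣ b)) ∪ Dummy with ht
  have hall : ∀ s : Finset {a // a ∈ A}, s.card ≤ (s.biUnion t).card := by
    intro s
    rcases s.eq_empty_or_nonempty with rfl | hsne
    · simp
    · have hbi : s.biUnion t = NSet x L (s.image Subtype.val) ∪ Dummy := by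
        ext b
        simp only [ht, Finset.mem_biUnion, Finset.mem_union, Finset.mem_filter, NSet,
          Finset.mem_image]
        constructor
        · rintro ⟨a, has, hmem | hmem⟩
          · exact Or.inl ⟨hmem.1, ⟨(a : ℕ), ⟨a, has, rfl⟩, hmem.2⟩⟩
          · exact Or.inr hmem
        · rintro (⟨hbI, ⟨aval, ⟨a, has, rfl⟩, hdvd⟩⟩ | hmem)
          · exact ⟨a, has, Or.inl ⟨hbI, hdvd⟩⟩
          · obtain ⟨a, has⟩ := hsne
            exact ⟨a, has, Or.inr hmem⟩
      rw [hbi]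
      have hdisj : Disjoint (NSet x L (s.image Subtype.val)) Dummy := by
        rw [Finset.disjoint_left]
        intro b hb hbD
        exact hDdisj b hbD (Finset.mem_filter.mp hb).1
      rw [Finset.card_union_of_disjoint hdisj, hDcard]
      have hSsub : ∀ a ∈ s.image Subtype.val, 0 < a ∧ a ≤ L := by
        rintro a ha
        rw [Finset.mem_image] at ha
        obtain ⟨a', _, rfl⟩ := ha
        exact ⟨hpos _ a'.2, hle _ a'.2⟩
      have hkey := key_lemma x L hLpos (s.image Subtype.val) hSsub
      have hcardim : (s.image Subtype.val).card = s.card :=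
        Finset.card_image_of_injective s Subtype.val_injective
      rw [hcardim] at hkey
      have hsm : s.card ≤ m := by
        calc s.card ≤ (Finset.univ : Finset {a // a ∈ A}).card := Finset.card_le_univ s
          _ = A.card := by rw [Finset.card_univ, Fintype.card_coe]
          _ = m := hA
      have := arith1 m s.card hsm
      omega
  obtain ⟨F, hFinj, hFmem⟩ := (Finset.all_card_le_biUnion_card_iff_exists_injective t).mp hall
  set good : Finset {a // a ∈ A} := Finset.univ.filter (fun a => F a ∉ Dummy) with hgood
  have hbadcard : (Finset.univ.filter (fun a : {a // a ∈ A} => ¬ F a ∉ Dummy)).card ≤ m - R := by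
    rw [← hDcard]
    apply Finset.card_le_card_of_injOn F
    · intro a ha
      have := (Finset.mem_filter.mp ha).2
      push_neg at this
      exact this
    · exact Function.Injective.injOn hFinj
  have hgoodcard : R ≤ good.card := by
    have h1 : good.card + (Finset.univ.filter (fun a : {a // a ∈ A} => ¬ F a ∉ Dummy)).card
        = m := by
      rw [hgood, Finset.card_filter_add_card_filter_not, Finset.card_univ,
        Fintype.card_coe, hA]
    omega
  obtain ⟨T, hTsub, hTcard⟩ := Finset.exists_subset_card_eq hgoodcard
  set e := T.orderIsoOfFin hTcard with he
  refine ⟨fun i => ((e i : {a // a ∈ A}) : ℕ), fun i => F (e i), ?_, ?_, ?_⟩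
  · intro i j hij
    have h1 : ((e i : {a // a ∈ A}) : ℕ) = ((e j : {a // a ∈ A}) : ℕ) := hij
    have h2 : (e i : {a // a ∈ A}) = (e j : {a // a ∈ A}) := Subtype.val_injective h1
    have h3 : e i = e j := Subtype.val_injective h2
    exact e.injective h3
  · intro i j hij
    have h1 : (e i : {a // a ∈ A}) = (e j : {a // a ∈ A}) := hFinj hij
    have h3 : e i = e j := Subtype.val_injective h1
    exact e.injective h3
  · intro i
    have heT : (e i : {a // a ∈ A}) ∈ T := (e i).2
    have heg : (e i : {a // a ∈ A}) ∈ good := hTsub heT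
    have hnd : F (e i) ∉ Dummy := (Finset.mem_filter.mp heg).2
    have hmem := hFmem (e i)
    rw [ht] at hmem
    rcases Finset.mem_union.mp hmem with hmem | hmem
    · obtain ⟨hbI, hdvd⟩ := Finset.mem_filter.mp hmem
      obtain ⟨hx1, hx2⟩ := mem_Ifin.mp hbI
      exact ⟨((e i : {a // a ∈ A})).2, hdvd, hx1, by exact_mod_cast hx2⟩
    · exact absurd hmem hnd

lemma crt2 (M N : ℕ) (h : Nat.Coprime M N) (c₁ c₂ : ℤ) :
    ∃ X : ℤ, (M:ℤ) ∣ X - c₁ ∧ (N:ℤ) ∣ X - c₂ := by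
  have hb : (Nat.gcd M N : ℤ) = M * Int.gcdA M N + N * Int.gcdB M N := Int.gcd_eq_gcd_ab M N
  rw [h] at hb
  push_cast at hb
  refine ⟨c₂ * (M * Int.gcdA M N) + c₁ * (N * Int.gcdB M N), ⟨Int.gcdA M N * (c₂ - c₁), ?_⟩,
    ⟨Int.gcdB M N * (c₁ - c₂), ?_⟩⟩
  · linear_combination (-c₁) * hb
  · linear_combination (-c₂) * hb

lemma crt {ι : Type*} (men : Finset ι) (nmod : ι → ℕ) (c : ι → ℤ)
    (hcop : ∀ i ∈ men, ∀ j ∈ men, i ≠ j → Nat.Coprime (nmod i) (nmod j)) :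
    ∃ X : ℤ, ∀ i ∈ men, (nmod i : ℤ) ∣ X - c i := by
  classical
  induction men using Finset.induction_on with
  | empty => exact ⟨0, by simp⟩
  | @insert a s ha ih =>
    obtain ⟨X₀, hX₀⟩ := ih (fun i hi j hj hij => hcop i (Finset.mem_insert_of_mem hi) j
      (Finset.mem_insert_of_mem hj) hij)
    have hcop2 : Nat.Coprime (nmod a) (∏ i ∈ s, nmod i) :=
      Nat.Coprime.prod_right (fun i hi => hcop a (Finset.mem_insert_self a s) i
        (Finset.mem_insert_of_mem hi) (fun he => ha (he ▸ hi)))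
    obtain ⟨X, hX1, hX2⟩ := crt2 (nmod a) (∏ i ∈ s, nmod i) hcop2 (c a) X₀
    refine ⟨X, fun i hi => ?_⟩
    rcases Finset.mem_insert.mp hi with rfl | hi
    · exact hX1
    · have hd : (nmod i : ℤ) ∣ ((∏ k ∈ s, nmod k : ℕ) : ℤ) := by
        exact_mod_cast Finset.dvd_prod_of_mem nmod hi
    /- combine -/
      have h1 : (nmod i : ℤ) ∣ X - X₀ := dvd_trans hd hX2
      have h2 := hX₀ i hi
      have he : X - c i = (X - X₀) + (X₀ - c i) := by ring
      rw [he]; exact dvd_add h1 h2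

set_option maxHeartbeats 2000000 in
lemma upper (m r : ℕ) (hm : 0 < m) (h : MatchProp m r) :
    r ≤ min m ⌈2 * Real.sqrt m⌉₊ := by
  -- first: r ≤ m always
  have hrm : r ≤ m := by
    have hA1 : ((Finset.range m).image (· + 1)).card = m := by
      rw [Finset.card_image_of_injective _ (fun a b hab => by omega), Finset.card_range]
    obtain ⟨c, b, hcinj, hbinj, hcond⟩ := h ((Finset.range m).image (· + 1)) hA1
      (by intro a ha; rw [Finset.mem_image] at ha; obtain ⟨k, _, rfl⟩ := ha; omega) 0
    have := Finset.card_le_card_of_injOn (s := (Finset.univ : Finset (Fin r))) c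
      (fun i _ => (hcond i).1) (Function.Injective.injOn hcinj)
    simpa [hA1] using this
  rcases le_or_gt m ⌈2 * Real.sqrt m⌉₊ with hcase | hcase
  · rw [min_eq_left hcase]; exact hrm
  · rw [min_eq_right hcase.le]
    set n := ⌈2 * Real.sqrt m⌉₊ with hn
    -- 4m ≤ n^2
    have h4m : 4 * m ≤ n^2 := by
      have h1 : 2 * Real.sqrt m ≤ (n:ℝ) := Nat.le_ceil _
      have h2 : Real.sqrt m ^ 2 = (m:ℝ) := Real.sq_sqrt (by positivity)
      have h3 : ((4 * m : ℕ) : ℝ) ≤ ((n^2 : ℕ) : ℝ) := by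
        push_cast
        nlinarith [Real.sqrt_nonneg (m:ℝ)]
      exact_mod_cast h3
    have hn2 : 2 ≤ n := by
      by_contra hcon
      push_neg at hcon
      interval_cases n <;> omega
    set p := (n+1)/2 with hp
    set q := n/2 with hq
    have hpq : p + q = n := by omega
    have hq1 : 1 ≤ q := by omega
    have hp1 : 1 ≤ p := by omega
    have hmpq : m ≤ p * q := by
      rcases Nat.even_or_odd n with ⟨k, hk⟩ | ⟨k, hk⟩
      · have hpk : p = k := by omega
        have hqk : q = k := by omega
        have hexp : n^2 = 4*(k*k) := by rw [hk]; ring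
        rw [hpk, hqk]
        omega
      · have hpk : p = k + 1 := by omega
        have hqk : q = k := by omega
        have hexp : n^2 = 4*(k*k) + 4*k + 1 := by rw [hk]; ring
        have hne : 4 * m ≠ n^2 := by omega
        rw [hpk, hqk]
        have : (k+1)*k = k*k + k := by ring
        omega
    -- construction
    set F := m.factorial with hF
    have hF1 : 1 ≤ F := Nat.factorial_pos m
    set C := p*q*F + 2*q*F with hC
    set W := 6*p*q + 6*q + 3*m + 1 with hW
    set L := 1 + F*W with hL
    set aa : ℕ → ℕ := fun k => L - k*F with haa
    have hkFL : ∀ k, k < m → k*F + C + p*q*F + 1 < L := by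
      intro k hk
      have h1 : k*F + F ≤ m*F := by
        have : k + 1 ≤ m := hk
        calc k*F + F = (k+1)*F := by ring
          _ ≤ m*F := Nat.mul_le_mul_right F this
      have h2 : F*W = F*(6*p*q) + F*(6*q) + F*(3*m) + F := by rw [hW]; ring
      have h3 : p*q*F + 2*q*F + p*q*F ≤ F*(6*p*q) + F*(6*q) := by
        nlinarith [hq1, hp1, hF1]
      have h4 : k*F + F ≤ F*(3*m) := by
        calc k*F + F ≤ m*F := h1
          _ ≤ F*(3*m) := by nlinarith
      omega
    have hkL : ∀ k, k < m → k*F + 1 ≤ L := by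
      intro k hk
      have := hkFL k hk
      omega
    have haaZ : ∀ k, k < m → ((aa k : ℕ) : ℤ) = (L:ℤ) - k*F := by
      intro k hk
      have h1 : k*F ≤ L := by have := hkL k hk; omega
      simp only [haa]
      push_cast [Nat.cast_sub h1]
      ring
    -- coprimality
    have hcop : ∀ k ∈ Finset.range m, ∀ k' ∈ Finset.range m, k ≠ k' →
        Nat.Coprime (aa k) (aa k') := by
      intro k hk k' hk' hkk
      rw [Finset.mem_range] at hk hk'
      by_contra hcon
      obtain ⟨ρ, hρp, hρ1, hρ2⟩ := Nat.Prime.not_coprime_iff_dvd.mp hcon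
      by_cases hρF : ρ ∣ F
      · have hρkF : ρ ∣ k*F := Dvd.dvd.mul_left hρF k
        have hρL : ρ ∣ L := by
          have hsum : aa k + k*F = L := by
            have := hkL k hk
            simp only [haa]
            omega
          rw [← hsum]
          exact Nat.dvd_add hρ1 hρkF
        have hρFW : ρ ∣ F*W := Dvd.dvd.mul_right hρF W
        have hρone : ρ ∣ 1 := by
          have : L - F*W = 1 := by omega
          rw [← this]
          exact Nat.dvd_sub hρL hρFW
        have := Nat.le_of_dvd one_pos hρone
        have := hρp.two_le
        omega
      · -- ρ does not divide F
        have hdiff : (ρ:ℤ) ∣ ((k':ℤ) - k) * F := by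
          have h1 : (ρ:ℤ) ∣ (aa k : ℤ) := Int.natCast_dvd_natCast.mpr hρ1
          have h2 : (ρ:ℤ) ∣ (aa k' : ℤ) := Int.natCast_dvd_natCast.mpr hρ2
          have e1 := haaZ k hk
          have e2 := haaZ k' hk'
          have : ((k':ℤ) - k) * F = (aa k : ℤ) - (aa k' : ℤ) := by
            rw [e1, e2]; ring
          rw [this]
          exact dvd_sub h1 h2
        have hρprime : Prime (ρ:ℤ) := Nat.prime_iff_prime_int.mp hρp
        rcases hρprime.dvd_mul.mp hdiff with hd | hd
        · have hne : (k':ℤ) - k ≠ 0 := by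
            intro hcon2
            apply hkk
            omega
          have hρle : (ρ:ℤ) ≤ |(k':ℤ) - k| := Int.le_of_dvd (abs_pos.mpr hne) ((dvd_abs _ _).mpr hd)
          have hρm : ρ ≤ m := by
            have : |(k':ℤ) - k| < m := by
              rw [abs_lt]
              omega
            omega
          exact hρF (Nat.dvd_factorial hρp.pos hρm)
        · exact hρF (Int.natCast_dvd_natCast.mp hd)
    -- CRT
    obtain ⟨X, hX⟩ := crt (Finset.range m) aa (fun k => -((C:ℤ) + ((k/q : ℕ) : ℤ)*(q:ℤ)*F)) hcop
    have hXdvd : ∀ k, k < m → ((aa k : ℕ):ℤ) ∣ X + C + ((k/q : ℕ):ℤ)*(q:ℤ)*F := by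
      intro k hk
      have h9 := hX k (Finset.mem_range.mpr hk)
      have he : X - -((C:ℤ) + ((k/q : ℕ):ℤ)*(q:ℤ)*F) = X + C + ((k/q : ℕ):ℤ)*(q:ℤ)*F := by
        ring
      rwa [he] at h9
    -- instantiate the matching property
    set A : Finset ℕ := (Finset.range m).image aa with hA
    have hAcard : A.card = m := by
      rw [hA, Finset.card_image_of_injOn, Finset.card_range]
      intro k hk k' hk' hkk
      rw [Finset.mem_coe, Finset.mem_range] at hk hk'
      have e1 := haaZ k hk
      have e2 := haaZ k' hk'
      have : ((k:ℤ))*F = (k':ℤ)*F := by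
        rw [hkk] at e1
        omega
      have hFz : (F:ℤ) ≠ 0 := Int.natCast_ne_zero.mpr (by omega)
      have : (k:ℤ) = k' := by
        exact mul_right_cancel₀ hFz this
      exact_mod_cast this
    have hApos : ∀ a ∈ A, 0 < a := by
      intro a ha
      rw [hA, Finset.mem_image] at ha
      obtain ⟨k, hk, rfl⟩ := ha
      rw [Finset.mem_range] at hk
      have := hkL k hk
      simp only [haa]
      omega
    have hsup : A.sup id = L := by
      apply le_antisymm
      · apply Finset.sup_le
        intro a ha
        rw [hA, Finset.mem_image] at ha
        obtain ⟨k, _, rfl⟩ := ha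
        exact Nat.sub_le L (k*F)
      · have hmem : L ∈ A := by
          rw [hA, Finset.mem_image]
          exact ⟨0, Finset.mem_range.mpr hm, by simp [haa]⟩
        exact Finset.le_sup (f := id) hmem
    obtain ⟨c, b, hcinj, hbinj, hcond⟩ := h A hAcard hApos ((X:ℝ) - 1/2)
    -- the B set
    set uZ : ℕ → ℤ := fun i => X + C + i*(q:ℤ)*F with huZ
    set vZ : ℕ → ℤ := fun j => X + L + C - j*F with hvZ
    set Bset : Finset ℤ := ((Finset.range p).image uZ) ∪ ((Finset.range q).image vZ)
      with hB
    have hBcard : Bset.card ≤ p + q := by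
      calc Bset.card ≤ ((Finset.range p).image uZ).card + ((Finset.range q).image vZ).card :=
            Finset.card_union_le _ _
        _ ≤ p + q := by
            gcongr <;> [exact le_trans (Finset.card_image_le) (by rw [Finset.card_range]);
              exact le_trans (Finset.card_image_le) (by rw [Finset.card_range])]
    have hbmem : ∀ i : Fin r, b i ∈ Bset := by
      intro i
      obtain ⟨hcA, hdvd, hlo, hhi⟩ := hcond i
      rw [hsup] at hhi
      rw [hA, Finset.mem_image] at hcA
      obtain ⟨k, hkr, hck⟩ := hcA
      rw [Finset.mem_range] at hkr
      -- integer bounds on b i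
      have hblo : X ≤ b i := by
        by_contra hcon
        push_neg at hcon
        have : (b i : ℝ) ≤ (X:ℝ) - 1 := by
          have : b i ≤ X - 1 := by omega
          calc (b i : ℝ) ≤ ((X - 1 : ℤ):ℝ) := by exact_mod_cast this
            _ = (X:ℝ) - 1 := by push_cast; ring
        linarith
      have hbhi : b i ≤ X + 2*(L:ℤ) - 1 := by
        by_contra hcon
        push_neg at hcon
        have h1 : (X:ℤ) + 2*L ≤ b i := by omega
        have h2 : (X:ℝ) + 2*(L:ℝ) ≤ (b i : ℝ) := by exact_mod_cast h1
        linarith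
      -- divisibility
      have hdvd2 : ((aa k : ℕ):ℤ) ∣ b i := by rw [hck]; exact hdvd
      set ii := k / q with hii
      set jj := k % q with hjj
      have hiip : ii < p := by
        rw [hii]
        have hqp : m ≤ q*p := by rw [Nat.mul_comm]; exact hmpq
        exact Nat.div_lt_of_lt_mul (lt_of_lt_of_le hkr hqp)
      have hjjq : jj < q := Nat.mod_lt k hq1
      have hksplit : k = ii*q + jj := by
        rw [hii, hjj, Nat.mul_comm]
        exact (Nat.div_add_mod k q).symm
      set d : ℤ := b i - uZ ii with hd
      have hddvd : ((aa k : ℕ):ℤ) ∣ d := by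
        rw [hd]
        exact dvd_sub hdvd2 (by rw [huZ]; exact hXdvd k hkr)
      have haaZk := haaZ k hkr
      have hsz := hkFL k hkr
      -- d > -(aa k)
      have hd1 : -((aa k:ℕ):ℤ) < d := by
        rw [hd, huZ, haaZk]
        simp only
        have hiq : (ii:ℤ)*q*F + C + k*F < L := by
          have hnat : ii*q*F + C + k*F < L := by
            have h5 : ii*q + q ≤ p*q := by
              have h5a : ii + 1 ≤ p := hiip
              calc ii*q + q = (ii+1)*q := by ring
                _ ≤ p*q := Nat.mul_le_mul_right q h5a
            have h6 : ii*q*F + q*F ≤ p*q*F := by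
              calc ii*q*F + q*F = (ii*q + q)*F := by ring
                _ ≤ p*q*F := Nat.mul_le_mul_right F h5
            have := hkFL k hkr
            omega
          exact_mod_cast hnat
        push_cast at hiq ⊢
        linarith [hblo]
      -- d < 2 * aa k
      have hd2 : d < 2*((aa k:ℕ):ℤ) := by
        rw [hd, huZ, haaZk]
        simp only
        have hiq : 2*(k*F) ≤ C + ii*q*F := by
          have h5 : k*F = ii*q*F + jj*F := by rw [hksplit]; ring
          have h6 : ii*q*F + q*F ≤ p*q*F := by
            have : (ii+1)*q ≤ p*q := Nat.mul_le_mul_right q hiip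
            have := Nat.mul_le_mul_right F this
            nlinarith
          have h7 : jj*F + F ≤ q*F := by
            have : (jj+1) ≤ q := hjjq
            have := Nat.mul_le_mul_right F this
            nlinarith
          rw [hC]
          nlinarith
        have hiqZ : 2*((k:ℤ)*F) ≤ (C:ℤ) + ii*q*F := by exact_mod_cast hiq
        push_cast at hiqZ ⊢
        linarith [hbhi]
      -- conclude d = 0 or d = aa k
      obtain ⟨e, he⟩ := hddvd
      have haapos : (0:ℤ) < ((aa k:ℕ):ℤ) := by
        have : 0 < aa k := by have := hkL k hkr; simp only [haa]; omega
        exact_mod_cast this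
      have he01 : e = 0 ∨ e = 1 := by
        rcases lt_trichotomy e 0 with he1 | he1 | he1
        · exfalso
          have : d ≤ -((aa k:ℕ):ℤ) := by
            rw [he]
            calc ((aa k:ℕ):ℤ) * e ≤ ((aa k:ℕ):ℤ) * (-1) := by
                  apply mul_le_mul_of_nonneg_left (by omega) haapos.le
              _ = -((aa k:ℕ):ℤ) := by ring
          linarith [hd1]
        · left; exact he1
        · rcases lt_or_ge e 2 with he2 | he2
          · right; omega
          · exfalso
            have : 2*((aa k:ℕ):ℤ) ≤ d := by
              rw [he]
              calc 2*((aa k:ℕ):ℤ) = ((aa k:ℕ):ℤ) * 2 := by ring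
                _ ≤ ((aa k:ℕ):ℤ) * e := by
                  apply mul_le_mul_of_nonneg_left he2 haapos.le
            linarith [hd2]
      rcases he01 with rfl | rfl
      · have : b i = uZ ii := by
          rw [mul_zero] at he
          rw [hd] at he
          omega
        rw [this, hB]
        apply Finset.mem_union_left
        exact Finset.mem_image_of_mem uZ (Finset.mem_range.mpr hiip)
      · have hbv : b i = vZ jj := by
          rw [mul_one] at he
          have : b i = uZ ii + ((aa k:ℕ):ℤ) := by rw [hd] at he; omega
          rw [this, huZ, hvZ, haaZk]
          simp only
          have : (k:ℤ) = ii*q + jj := by exact_mod_cast hksplit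
          rw [this]
          push_cast
          ring
        rw [hbv, hB]
        apply Finset.mem_union_right
        exact Finset.mem_image_of_mem vZ (Finset.mem_range.mpr hjjq)
    -- conclude
    have hfin : r ≤ Bset.card := by
      have := Finset.card_le_card_of_injOn (s := (Finset.univ : Finset (Fin r)))
        (fun i => b i) (fun i _ => hbmem i) (Function.Injective.injOn hbinj)
      simpa using this
    omega


theorem erdos_f_eq (m : ℕ) (hm : 0 < m) :
    f m = min m ⌈2 * Real.sqrt m⌉₊ := by
  have hlow : MatchProp m (min m ⌈2 * Real.sqrt m⌉₊) := lower m hm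
  have hup : ∀ r ∈ {r : ℕ | MatchProp m r}, r ≤ min m ⌈2 * Real.sqrt m⌉₊ :=
    fun r hr => upper m r hm hr
  apply le_antisymm
  · exact csSup_le ⟨_, hlow⟩ hup
  · exact le_csSup ⟨_, fun r hr => hup r hr⟩ hlow
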